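/- Let F and θ be integers with 1 ≤ θ and F ≥ 4θ. Then W(F,θ) > 0, where W(F,θ) is the expected weight of an edge under the uniform product measure. -/

import Mathlib

/-- `p F j` is the probability mass function of the Binomial(F,1/2) distribution. -/
def binomHalf (F j : ℕ) : ℚ := (F.choose j : ℚ) * (1/2) ^ F

/-- The expected weight `W (F,θ)` of an edge under the uniform product measure. -/
def expectedWeight (F θ : ℕ) : ℚ :=
  (∑ j ∈ Finset.range (θ + 1), (-(j : ℚ)) * binomHalf F j)
    + ∑ j ∈ Finset.Icc (θ + 1) F,
        ((j : ℚ) + 2 * (1 - (j : ℚ) / (F : ℚ) - (θ : ℚ))) * binomHalf F j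

lemma sum_j_choose (n : ℕ) :
    ∑ j ∈ Finset.range (n + 2), (j : ℚ) * ((n+1).choose j : ℚ) = (n+1) * 2 ^ n := by
  rw [Finset.sum_range_succ']
  push_cast
  have h : ∀ k : ℕ, ((k:ℚ)+1) * (((n+1).choose (k+1) : ℕ) : ℚ) = ((n:ℚ)+1) * ((n.choose k : ℕ) : ℚ) := by
    intro k
    have h2 : ((Nat.succ n * n.choose k : ℕ) : ℚ) = (((n+1).choose (k+1) * (k+1) : ℕ) : ℚ) := by
      exact_mod_cast congrArg (Nat.cast (R := ℚ)) (Nat.add_one_mul_choose_eq n k)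
    push_cast at h2
    linarith [h2]
  calc (∑ k ∈ Finset.range (n+1), ((k:ℚ)+1) * ((n+1).choose (k+1) : ℚ)) + (0:ℚ) * ((n+1).choose 0 : ℚ)
      = ∑ k ∈ Finset.range (n+1), ((n:ℚ)+1) * (n.choose k : ℚ) := by
        rw [Finset.sum_congr rfl (fun k _ => h k)]; ring
    _ = ((n:ℚ)+1) * ∑ k ∈ Finset.range (n+1), (n.choose k : ℚ) := by rw [Finset.mul_sum]
    _ = (n+1) * 2 ^ n := by
        have : ∑ k ∈ Finset.range (n+1), (n.choose k : ℚ) = 2 ^ n := by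
          exact_mod_cast congrArg (Nat.cast (R := ℚ)) (Nat.sum_range_choose n)
        rw [this]

lemma binomHalf_nonneg (F j : ℕ) : 0 ≤ binomHalf F j := by
  unfold binomHalf; positivity

lemma sum_binomHalf (F : ℕ) : ∑ j ∈ Finset.range (F + 1), binomHalf F j = 1 := by
  unfold binomHalf
  rw [← Finset.sum_mul]
  have : ∑ j ∈ Finset.range (F+1), (F.choose j : ℚ) = 2 ^ F := by
    exact_mod_cast congrArg (Nat.cast (R := ℚ)) (Nat.sum_range_choose F)
  rw [this, div_pow, one_pow, mul_one_div, div_self (by positivity)]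

lemma sum_mul_binomHalf (F : ℕ) (hF : 1 ≤ F) :
    ∑ j ∈ Finset.range (F + 1), (j : ℚ) * binomHalf F j = (F : ℚ) / 2 := by
  obtain ⟨n, rfl⟩ : ∃ n, F = n + 1 := ⟨F - 1, by omega⟩
  unfold binomHalf
  calc ∑ j ∈ Finset.range (n + 2), (j : ℚ) * ((n+1).choose j * (1/2) ^ (n+1))
      = (∑ j ∈ Finset.range (n + 2), (j : ℚ) * ((n+1).choose j : ℚ)) * (1/2) ^ (n+1) := by
        rw [Finset.sum_mul]; exact Finset.sum_congr rfl fun j _ => by ring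
    _ = ((n:ℚ)+1) * 2 ^ n * (1/2) ^ (n+1) := by rw [sum_j_choose]
    _ = ((n+1 : ℕ) : ℚ) / 2 := by
        rw [div_pow, one_pow, pow_succ]
        push_cast
        field_simp

lemma tail_symm (F θ : ℕ) (hθF : θ ≤ F) :
    ∑ j ∈ Finset.range (θ + 1), binomHalf F j
      = ∑ j ∈ Finset.Icc (F - θ) F, binomHalf F j := by
  apply Finset.sum_nbij' (i := fun j => F - j) (j := fun j => F - j)
  · intro a ha
    simp only [Finset.mem_range] at ha
    simp only [Finset.mem_Icc]; omega
  · intro a ha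
    simp only [Finset.mem_Icc] at ha
    simp only [Finset.mem_range]; omega
  · intro a ha; simp only [Finset.mem_range] at ha; omega
  · intro a ha; simp only [Finset.mem_Icc] at ha; omega
  · intro a ha
    simp only [Finset.mem_range] at ha
    unfold binomHalf
    rw [Nat.choose_symm (by omega)]

lemma tail_le_half (F θ : ℕ) (h : 2 * θ < F) :
    ∑ j ∈ Finset.range (θ + 1), binomHalf F j ≤ 1 / 2 := by
  have hsymm := tail_symm F θ (by omega)
  have hdisj : Disjoint (Finset.range (θ + 1)) (Finset.Icc (F - θ) F) := by
    rw [Finset.disjoint_left]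
    intro a ha hb
    simp only [Finset.mem_range] at ha
    simp only [Finset.mem_Icc] at hb
    omega
  have hsub : Finset.range (θ + 1) ∪ Finset.Icc (F - θ) F ⊆ Finset.range (F + 1) := by
    intro a ha
    simp only [Finset.mem_union, Finset.mem_range, Finset.mem_Icc] at ha ⊢
    omega
  have := Finset.sum_le_sum_of_subset_of_nonneg hsub
    (fun i _ _ => binomHalf_nonneg F i)
  rw [Finset.sum_union hdisj, sum_binomHalf] at this
  linarith [hsymm, this]


theorem expectedWeight_pos_of_four_theta_le (F θ : ℕ) (hθ : 1 ≤ θ) (hF : 4 * θ ≤ F) :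
    0 < expectedWeight F θ := by
  have hF1 : 1 ≤ F := by omega
  have hFQ : (0:ℚ) < (F:ℚ) := by exact_mod_cast Nat.pos_of_ne_zero (by omega)
  set S : ℚ := ∑ j ∈ Finset.range (θ + 1), binomHalf F j with hS
  set T : ℚ := ∑ j ∈ Finset.range (θ + 1), (j:ℚ) * binomHalf F j with hT
  -- splitting of full-range sums
  have key : ∀ f : ℕ → ℚ, (∑ j ∈ Finset.range (θ + 1), f j) + (∑ j ∈ Finset.Icc (θ + 1) F, f j)
      = ∑ j ∈ Finset.range (F + 1), f j := by
    intro f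
    have h1 : Finset.Icc (θ+1) F = Finset.Ico (θ+1) (F+1) := by
      ext a; simp only [Finset.mem_Icc, Finset.mem_Ico]; omega
    rw [h1, Finset.range_eq_Ico, Finset.range_eq_Ico]
    exact Finset.sum_Ico_consecutive f (m := 0) (n := θ + 1) (k := F + 1) (by omega) (by omega)
  have hIccP : ∑ j ∈ Finset.Icc (θ + 1) F, binomHalf F j = 1 - S := by
    have := key (fun j => binomHalf F j)
    rw [sum_binomHalf] at this
    linarith [this]
  have hIccT : ∑ j ∈ Finset.Icc (θ + 1) F, (j:ℚ) * binomHalf F j = (F:ℚ)/2 - T := by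
    have := key (fun j => (j:ℚ) * binomHalf F j)
    rw [sum_mul_binomHalf F hF1] at this
    linarith [this]
  -- rewriting the second sum
  have hB : ∑ j ∈ Finset.Icc (θ + 1) F,
        ((j : ℚ) + 2 * (1 - (j : ℚ) / (F : ℚ) - (θ : ℚ))) * binomHalf F j
      = (1 - 2/(F:ℚ)) * ((F:ℚ)/2 - T) + (2 - 2*(θ:ℚ)) * (1 - S) := by
    rw [← hIccT, ← hIccP, Finset.mul_sum, Finset.mul_sum, ← Finset.sum_add_distrib]
    apply Finset.sum_congr rfl
    intro j _
    field_simp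
    ring
  have hA : ∑ j ∈ Finset.range (θ + 1), (-(j : ℚ)) * binomHalf F j = -T := by
    rw [hT, ← Finset.sum_neg_distrib]
    exact Finset.sum_congr rfl fun j _ => by ring
  have hW : expectedWeight F θ = -T + ((1 - 2/(F:ℚ)) * ((F:ℚ)/2 - T) + (2 - 2*(θ:ℚ)) * (1 - S)) := by
    rw [expectedWeight, hA, hB]
  -- the product expansion with the atom T / F
  have hexp : (1 - 2/(F:ℚ)) * ((F:ℚ)/2 - T) = (F:ℚ)/2 - T - 1 + 2*(T/(F:ℚ)) := by
    field_simp
    ring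
  -- bounds
  have hSle : S ≤ 1/2 := tail_le_half F θ (by omega)
  have hS0 : 0 ≤ S := Finset.sum_nonneg fun j _ => binomHalf_nonneg F j
  have hT0 : 0 ≤ T := Finset.sum_nonneg fun j _ => mul_nonneg (by positivity) (binomHalf_nonneg F j)
  have hTF : 0 ≤ T / (F:ℚ) := div_nonneg hT0 (le_of_lt hFQ)
  -- θ*S - T ≥ θ*(1/2)^F > 0
  have hθS : (θ:ℚ) * ((1/2:ℚ))^F ≤ (θ:ℚ) * S - T := by
    have hsum : ∑ j ∈ Finset.range (θ + 1), ((θ:ℚ) - j) * binomHalf F j = (θ:ℚ) * S - T := by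
      rw [hS, hT, Finset.mul_sum, ← Finset.sum_sub_distrib]
      exact Finset.sum_congr rfl fun j _ => by ring
    have hmem : (0:ℕ) ∈ Finset.range (θ + 1) := by simp
    have hle := Finset.single_le_sum (f := fun j => ((θ:ℚ) - j) * binomHalf F j)
      (fun j hj => by
        have : (j:ℚ) ≤ (θ:ℚ) := by
          exact_mod_cast Nat.le_of_lt_succ (Finset.mem_range.mp hj)
        exact mul_nonneg (by linarith) (binomHalf_nonneg F j)) hmem
    have h0 : ((θ:ℚ) - (0:ℕ)) * binomHalf F 0 = (θ:ℚ) * ((1/2:ℚ))^F := by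
      unfold binomHalf
      simp
    have hle2 : ((θ:ℚ) - ((0:ℕ):ℚ)) * binomHalf F 0 ≤ (θ:ℚ) * S - T := by
      rw [← hsum]; exact hle
    rw [h0] at hle2
    exact hle2
  have hθpos : (0:ℚ) < (θ:ℚ) * ((1/2:ℚ))^F := by
    have : (0:ℚ) < (θ:ℚ) := by exact_mod_cast hθ
    positivity
  have hFθ : (4:ℚ) * (θ:ℚ) ≤ (F:ℚ) := by exact_mod_cast hF
  rw [hW, hexp]
  nlinarith [hθS, hθpos, hSle, hS0, hTF, hFθ]
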